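/- Let k be a field of characteristic ≠ 2 and k ≥ 1 a natural number; set r = 2k - 1. Let σ be the involution of A_r := k[[x,y]]/(y² - x^{2k}) defined by x ↦ -x, y ↦ y. Then the k-algebra map i : k[[u,v]]/(v² - u^k) → k[[x,y]]/(y² - x^{2k}) given by u ↦ x², v ↦ y is well-defined, injective, and its image equals the subring of σ-invariant elements of A_r. -/

import Mathlib

open MvPowerSeries Finset

namespace Stmt9Aux

noncomputable def Dd (d : Fin 2 →₀ ℕ) : Fin 2 →₀ ℕ :=
  Finsupp.single 0 (2 * d 0) + Finsupp.single 1 (d 1)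

noncomputable def Hd (d : Fin 2 →₀ ℕ) : Fin 2 →₀ ℕ :=
  Finsupp.single 0 (d 0 / 2) + Finsupp.single 1 (d 1)

lemma fin2_ext {a b : Fin 2 →₀ ℕ} (h0 : a 0 = b 0) (h1 : a 1 = b 1) : a = b :=
  Finsupp.ext fun i => by fin_cases i <;> assumption

@[simp] lemma Dd_apply0 (d : Fin 2 →₀ ℕ) : Dd d 0 = 2 * d 0 := by
  simp [Dd, Finsupp.single_apply]

@[simp] lemma Dd_apply1 (d : Fin 2 →₀ ℕ) : Dd d 1 = d 1 := by
  simp [Dd, Finsupp.single_apply]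

@[simp] lemma Hd_apply0 (d : Fin 2 →₀ ℕ) : Hd d 0 = d 0 / 2 := by
  simp [Hd, Finsupp.single_apply]

@[simp] lemma Hd_apply1 (d : Fin 2 →₀ ℕ) : Hd d 1 = d 1 := by
  simp [Hd, Finsupp.single_apply]

lemma Hd_Dd (d : Fin 2 →₀ ℕ) : Hd (Dd d) = d :=
  fin2_ext (by simp) (by simp)

lemma Dd_Hd {d : Fin 2 →₀ ℕ} (h : d 0 % 2 = 0) : Dd (Hd d) = d :=
  fin2_ext (by simp; omega) (by simp)


variable {k : Type*} [Field k]

noncomputable def Sf (f : MvPowerSeries (Fin 2) k) : MvPowerSeries (Fin 2) k :=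
  fun d => if d 0 % 2 = 0 then MvPowerSeries.coeff (Hd d) f else 0

noncomputable def Tf (f : MvPowerSeries (Fin 2) k) : MvPowerSeries (Fin 2) k :=
  fun d => (-1 : k) ^ (d 0) * MvPowerSeries.coeff d f

lemma coeff_Sf (f : MvPowerSeries (Fin 2) k) (d : Fin 2 →₀ ℕ) :
    MvPowerSeries.coeff d (Sf f) =
      if d 0 % 2 = 0 then MvPowerSeries.coeff (Hd d) f else 0 := rfl

lemma coeff_Tf (f : MvPowerSeries (Fin 2) k) (d : Fin 2 →₀ ℕ) :
    MvPowerSeries.coeff d (Tf f) = (-1 : k) ^ (d 0) * MvPowerSeries.coeff d f := rfl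

lemma Sf_injective : Function.Injective (Sf (k := k)) := by
  intro f g h
  ext d
  have := congrArg (MvPowerSeries.coeff (Dd d)) h
  rw [coeff_Sf, coeff_Sf] at this
  simpa [Nat.mul_mod_right, Hd_Dd] using this

lemma Sf_even (f : MvPowerSeries (Fin 2) k) {d : Fin 2 →₀ ℕ} (h : d 0 % 2 ≠ 0) :
    MvPowerSeries.coeff d (Sf f) = 0 := by
  rw [coeff_Sf, if_neg h]

lemma exists_Sf {g : MvPowerSeries (Fin 2) k}
    (h : ∀ d : Fin 2 →₀ ℕ, d 0 % 2 ≠ 0 → MvPowerSeries.coeff d g = 0) :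
    ∃ f, Sf f = g := by
  refine ⟨(show MvPowerSeries (Fin 2) k from fun d => MvPowerSeries.coeff (Dd d) g), ?_⟩
  ext d
  rw [coeff_Sf]
  by_cases hd : d 0 % 2 = 0
  · rw [if_pos hd]
    show MvPowerSeries.coeff (Dd (Hd d)) g = _
    rw [Dd_Hd hd]
  · rw [if_neg hd, eq_comm]
    exact h d hd

lemma Sf_one : Sf (1 : MvPowerSeries (Fin 2) k) = 1 := by
  ext d
  rw [coeff_Sf, MvPowerSeries.coeff_one, MvPowerSeries.coeff_one]
  by_cases hd : d = 0
  · subst hd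
    have : Hd (0 : Fin 2 →₀ ℕ) = 0 := fin2_ext (by simp) (by simp)
    simp [this]
  · rw [if_neg hd]
    by_cases he : d 0 % 2 = 0
    · rw [if_pos he, if_neg]
      intro hc
      apply hd
      have h0 : d 0 / 2 = 0 := by
        have := congrArg (fun x : Fin 2 →₀ ℕ => x 0) hc
        simpa using this
      have h1 : d 1 = 0 := by
        have := congrArg (fun x : Fin 2 →₀ ℕ => x 1) hc
        simpa using this
      exact fin2_ext (by simp; omega) (by simpa using h1)
    · rw [if_neg he]

lemma Sf_C (a : k) : Sf ((MvPowerSeries.C (σ := Fin 2) (R := k)) a) = (MvPowerSeries.C (σ := Fin 2) (R := k)) a := by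
  ext d
  rw [coeff_Sf, MvPowerSeries.coeff_C, MvPowerSeries.coeff_C]
  by_cases hd : d = 0
  · subst hd
    have : Hd (0 : Fin 2 →₀ ℕ) = 0 := fin2_ext (by simp) (by simp)
    simp [this]
  · rw [if_neg hd]
    by_cases he : d 0 % 2 = 0
    · rw [if_pos he, if_neg]
      intro hc
      apply hd
      have h0 : d 0 / 2 = 0 := by
        have := congrArg (fun x : Fin 2 →₀ ℕ => x 0) hc
        simpa using this
      have h1 : d 1 = 0 := by
        have := congrArg (fun x : Fin 2 →₀ ℕ => x 1) hc
        simpa using this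
      exact fin2_ext (by simp; omega) (by simpa using h1)
    · rw [if_neg he]

lemma Sf_add (f g : MvPowerSeries (Fin 2) k) : Sf (f + g) = Sf f + Sf g := by
  ext d
  rw [map_add, coeff_Sf, coeff_Sf, coeff_Sf, map_add]
  by_cases he : d 0 % 2 = 0 <;> simp [he]

lemma Sf_mul (f g : MvPowerSeries (Fin 2) k) : Sf (f * g) = Sf f * Sf g := by
  ext d
  rw [coeff_Sf, MvPowerSeries.coeff_mul]
  by_cases he : d 0 % 2 = 0
  · rw [if_pos he, MvPowerSeries.coeff_mul]
    have hfilter : (∑ p ∈ Finset.HasAntidiagonal.antidiagonal d,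
        MvPowerSeries.coeff p.1 (Sf f) * MvPowerSeries.coeff p.2 (Sf g))
        = ∑ p ∈ (Finset.HasAntidiagonal.antidiagonal d).filter (fun p => p.1 0 % 2 = 0),
        MvPowerSeries.coeff p.1 (Sf f) * MvPowerSeries.coeff p.2 (Sf g) := by
      refine (Finset.sum_filter_of_ne ?_).symm
      intro p hp hne
      by_contra hodd
      exact hne (by rw [coeff_Sf, if_neg hodd, zero_mul])
    rw [hfilter]
    refine Finset.sum_nbij' (fun q => (Dd q.1, Dd q.2)) (fun p => (Hd p.1, Hd p.2))
      ?_ ?_ ?_ ?_ ?_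
    · intro q hq
      rw [Finset.HasAntidiagonal.mem_antidiagonal] at hq
      have h0 : q.1 0 + q.2 0 = d 0 / 2 := by
        have := congrArg (fun x : Fin 2 →₀ ℕ => x 0) hq
        simpa using this
      have h1 : q.1 1 + q.2 1 = d 1 := by
        have := congrArg (fun x : Fin 2 →₀ ℕ => x 1) hq
        simpa using this
      rw [Finset.mem_filter, Finset.HasAntidiagonal.mem_antidiagonal]
      refine ⟨fin2_ext ?_ ?_, by simp⟩
      · simp [Finsupp.add_apply]; omega
      · simp [Finsupp.add_apply]; omega
    · intro p hp
      rw [Finset.mem_filter, Finset.HasAntidiagonal.mem_antidiagonal] at hp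
      obtain ⟨hsum, hev1⟩ := hp
      have h0 : p.1 0 + p.2 0 = d 0 := by
        have := congrArg (fun x : Fin 2 →₀ ℕ => x 0) hsum
        simpa using this
      have h1 : p.1 1 + p.2 1 = d 1 := by
        have := congrArg (fun x : Fin 2 →₀ ℕ => x 1) hsum
        simpa using this
      have hev2 : p.2 0 % 2 = 0 := by omega
      rw [Finset.HasAntidiagonal.mem_antidiagonal]
      refine fin2_ext ?_ ?_
      · simp [Finsupp.add_apply]; omega
      · simp [Finsupp.add_apply]; omega
    · intro q hq
      show (Hd (Dd q.1), Hd (Dd q.2)) = q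
      rw [Hd_Dd, Hd_Dd]
    · intro p hp
      rw [Finset.mem_filter, Finset.HasAntidiagonal.mem_antidiagonal] at hp
      obtain ⟨hsum, hev1⟩ := hp
      have h0 : p.1 0 + p.2 0 = d 0 := by
        have := congrArg (fun x : Fin 2 →₀ ℕ => x 0) hsum
        simpa using this
      have hev2 : p.2 0 % 2 = 0 := by omega
      show (Dd (Hd p.1), Dd (Hd p.2)) = p
      rw [Dd_Hd hev1, Dd_Hd hev2]
    · intro q hq
      show _ = MvPowerSeries.coeff (Dd q.1) (Sf f) * MvPowerSeries.coeff (Dd q.2) (Sf g)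
      rw [coeff_Sf, coeff_Sf, if_pos (by simp), if_pos (by simp), Hd_Dd, Hd_Dd]
  · rw [if_neg he, MvPowerSeries.coeff_mul]
    refine (Finset.sum_eq_zero fun p hp => ?_).symm
    rw [Finset.HasAntidiagonal.mem_antidiagonal] at hp
    have h0 : p.1 0 + p.2 0 = d 0 := by
      have := congrArg (fun x : Fin 2 →₀ ℕ => x 0) hp
      simpa using this
    by_cases h1 : p.1 0 % 2 = 0
    · rw [coeff_Sf (d := p.2), if_neg (by omega), mul_zero]
    · rw [coeff_Sf (d := p.1), if_neg h1, zero_mul]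


lemma Tf_mul (f g : MvPowerSeries (Fin 2) k) : Tf (f * g) = Tf f * Tf g := by
  ext d
  rw [coeff_Tf, MvPowerSeries.coeff_mul, MvPowerSeries.coeff_mul, Finset.mul_sum]
  refine Finset.sum_congr rfl fun p hp => ?_
  rw [Finset.HasAntidiagonal.mem_antidiagonal] at hp
  have h0 : p.1 0 + p.2 0 = d 0 := by
    have := congrArg (fun x : Fin 2 →₀ ℕ => x 0) hp
    simpa using this
  rw [coeff_Tf, coeff_Tf, ← h0, pow_add]
  ring

lemma Tf_Sf (f : MvPowerSeries (Fin 2) k) : Tf (Sf f) = Sf f := by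
  ext d
  rw [coeff_Tf, coeff_Sf]
  by_cases he : d 0 % 2 = 0
  · simp only [if_pos he, Even.neg_one_pow (Nat.even_iff.mpr he), one_mul]
  · simp only [if_neg he, mul_zero]

lemma even_of_Tf_eq (h2 : (2 : k) ≠ 0) {g : MvPowerSeries (Fin 2) k} (h : Tf g = g) :
    ∀ d : Fin 2 →₀ ℕ, d 0 % 2 ≠ 0 → MvPowerSeries.coeff d g = 0 := by
  intro d hd
  have := congrArg (MvPowerSeries.coeff d) h
  rw [coeff_Tf, Odd.neg_one_pow (Nat.odd_iff.mpr (by omega)), neg_one_mul] at this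
  have h2' : (2 : k) * MvPowerSeries.coeff d g = 0 := by
    rw [two_mul]
    linear_combination -this
  rcases mul_eq_zero.mp h2' with h | h
  · exact absurd h h2
  · exact h

noncomputable def Salg : MvPowerSeries (Fin 2) k →ₐ[k] MvPowerSeries (Fin 2) k where
  toFun := Sf
  map_one' := Sf_one
  map_mul' := Sf_mul
  map_zero' := by
    ext d
    rw [coeff_Sf]
    simp
  map_add' := Sf_add
  commutes' := fun a => by
    simp only [MvPowerSeries.algebraMap_apply, Algebra.algebraMap_self, RingHom.id_apply]
    exact Sf_C a

@[simp] lemma Salg_apply (f : MvPowerSeries (Fin 2) k) : Salg f = Sf f := rfl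

lemma Sf_X0_pow (n : ℕ) :
    Sf ((MvPowerSeries.X 0 : MvPowerSeries (Fin 2) k) ^ n) = MvPowerSeries.X 0 ^ (2 * n) := by
  ext d
  rw [coeff_Sf, MvPowerSeries.coeff_X_pow]
  by_cases he : d 0 % 2 = 0
  · rw [if_pos he, MvPowerSeries.coeff_X_pow]
    by_cases hc : d = Finsupp.single 0 (2 * n)
    · rw [if_pos hc, if_pos]
      subst hc
      refine fin2_ext ?_ ?_ <;> simp [Finsupp.single_apply]
    · rw [if_neg hc, if_neg]
      intro hc'
      apply hc
      rw [← Dd_Hd he, hc']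
      refine fin2_ext ?_ ?_ <;> simp [Finsupp.single_apply]
  · rw [if_neg he, MvPowerSeries.coeff_X_pow, if_neg]
    intro hc
    subst hc
    simp [Finsupp.single_apply] at he

lemma Sf_X1_sq :
    Sf ((MvPowerSeries.X 1 : MvPowerSeries (Fin 2) k) ^ 2) = MvPowerSeries.X 1 ^ 2 := by
  ext d
  rw [coeff_Sf, MvPowerSeries.coeff_X_pow]
  by_cases he : d 0 % 2 = 0
  · rw [if_pos he, MvPowerSeries.coeff_X_pow]
    by_cases hc : d = Finsupp.single 1 2
    · rw [if_pos hc, if_pos]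
      subst hc
      refine fin2_ext ?_ ?_ <;> simp [Finsupp.single_apply]
    · rw [if_neg hc, if_neg]
      intro hc'
      apply hc
      rw [← Dd_Hd he, hc']
      refine fin2_ext ?_ ?_ <;> simp [Finsupp.single_apply]
  · rw [if_neg he, MvPowerSeries.coeff_X_pow, if_neg]
    intro hc
    subst hc
    simp [Finsupp.single_apply] at he

lemma Sf_q (K : ℕ) :
    Sf ((MvPowerSeries.X 1 : MvPowerSeries (Fin 2) k) ^ 2 - MvPowerSeries.X 0 ^ K) =
      (MvPowerSeries.X 1 : MvPowerSeries (Fin 2) k) ^ 2 - MvPowerSeries.X 0 ^ (2 * K) := by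
  have := map_sub (Salg (k := k)) (MvPowerSeries.X 1 ^ 2) (MvPowerSeries.X 0 ^ K)
  simpa [Sf_X1_sq, Sf_X0_pow] using this

lemma p_ne_zero (K : ℕ) :
    ((MvPowerSeries.X 1 : MvPowerSeries (Fin 2) k) ^ 2 - MvPowerSeries.X 0 ^ (2 * K)) ≠ 0 := by
  intro h
  have := congrArg (MvPowerSeries.coeff (Finsupp.single 1 2)) h
  rw [map_sub, MvPowerSeries.coeff_X_pow, MvPowerSeries.coeff_X_pow, if_pos rfl, if_neg, map_zero]
    at this
  · simpa using this
  · intro hc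
    have := congrArg (fun x : Fin 2 →₀ ℕ => x 1) hc
    simpa [Finsupp.single_apply] using this

end Stmt9Aux


open Stmt9Aux in
theorem stmt_9 {k : Type*} [Field k] (h2 : (2 : k) ≠ 0) (K : ℕ) (hK : 1 ≤ K)
    (r : ℕ) (hr : r = 2 * K - 1)
    (I : Ideal (MvPowerSeries (Fin 2) k))
    (hI : I = Ideal.span {(MvPowerSeries.X 1 : MvPowerSeries (Fin 2) k) ^ 2 -
      (MvPowerSeries.X 0 : MvPowerSeries (Fin 2) k) ^ (2 * K)})
    (J : Ideal (MvPowerSeries (Fin 2) k))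
    (hJ : J = Ideal.span {(MvPowerSeries.X 1 : MvPowerSeries (Fin 2) k) ^ 2 -
      (MvPowerSeries.X 0 : MvPowerSeries (Fin 2) k) ^ K})
    (σ : (MvPowerSeries (Fin 2) k ⧸ I) ≃ₐ[k] (MvPowerSeries (Fin 2) k ⧸ I))
    (hσ : ∀ f : MvPowerSeries (Fin 2) k,
      σ (Ideal.Quotient.mk I f) =
        Ideal.Quotient.mk I
          ((fun d => (-1 : k) ^ (d 0) * MvPowerSeries.coeff d f) :
            MvPowerSeries (Fin 2) k)) :
    ∃ i : (MvPowerSeries (Fin 2) k ⧸ J) →ₐ[k] (MvPowerSeries (Fin 2) k ⧸ I),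
      (∀ f : MvPowerSeries (Fin 2) k,
        i (Ideal.Quotient.mk J f) =
          Ideal.Quotient.mk I
            ((fun d =>
              if d 0 % 2 = 0 then
                MvPowerSeries.coeff
                  (Finsupp.single (0 : Fin 2) (d 0 / 2) + Finsupp.single 1 (d 1)) f
              else 0) : MvPowerSeries (Fin 2) k)) ∧
      Function.Injective i ∧
      Set.range i = {a | σ a = a} := by
  classical
  set q : MvPowerSeries (Fin 2) k := MvPowerSeries.X 1 ^ 2 - MvPowerSeries.X 0 ^ K with hq_def
  set p : MvPowerSeries (Fin 2) k :=
    MvPowerSeries.X 1 ^ 2 - MvPowerSeries.X 0 ^ (2 * K) with hp_def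
  have hSq : Sf q = p := Sf_q K
  have hpI : p ∈ I := by rw [hI]; exact Ideal.subset_span rfl
  have hlift : ∀ a ∈ J, ((Ideal.Quotient.mkₐ k I).comp Salg) a = 0 := by
    intro a ha
    rw [hJ, Ideal.mem_span_singleton'] at ha
    obtain ⟨c, rfl⟩ := ha
    have : Sf (c * q) = Sf c * p := by rw [Sf_mul, hSq]
    simp only [AlgHom.comp_apply, Salg_apply, this, Ideal.Quotient.mkₐ_eq_mk,
      Ideal.Quotient.eq_zero_iff_mem]
    exact I.mul_mem_left _ hpI
  refine ⟨Ideal.Quotient.liftₐ J ((Ideal.Quotient.mkₐ k I).comp Salg) hlift, ?_, ?_, ?_⟩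
  all_goals
    have hi : ∀ f : MvPowerSeries (Fin 2) k,
        Ideal.Quotient.liftₐ J ((Ideal.Quotient.mkₐ k I).comp Salg) hlift
          (Ideal.Quotient.mk J f) = Ideal.Quotient.mk I (Sf f) := by
      intro f
      rw [Ideal.Quotient.liftₐ_apply]
      rfl
  -- key lemma
  all_goals
    have hkey : ∀ f : MvPowerSeries (Fin 2) k, Sf f ∈ I → f ∈ J := by
      intro f hf
      rw [hI, Ideal.mem_span_singleton'] at hf
      obtain ⟨c, hc⟩ := hf
      have hTp : Tf p = p := by rw [← hSq, Tf_Sf]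
      have h1 : Tf c * p = Sf f := by
        have h := congrArg Tf hc
        rw [Tf_mul, hTp, Tf_Sf] at h
        exact h
      have h0 : (c - Tf c) * p = 0 := by rw [sub_mul, hc, h1, sub_self]
      have hc0 : c - Tf c = 0 := by
        rcases mul_eq_zero.mp h0 with h | h
        · exact h
        · exact absurd h (p_ne_zero K)
      have hTc : Tf c = c := (eq_of_sub_eq_zero hc0).symm
      obtain ⟨c', hc'⟩ := exists_Sf (even_of_Tf_eq h2 hTc)
      rw [hJ, Ideal.mem_span_singleton']
      refine ⟨c', Sf_injective ?_⟩
      rw [Sf_mul, hc', hSq, hc]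
  · -- formula
    intro f
    exact hi f
  · -- injective
    intro a b hab
    obtain ⟨f, rfl⟩ := Ideal.Quotient.mk_surjective a
    obtain ⟨g, rfl⟩ := Ideal.Quotient.mk_surjective b
    rw [hi, hi, Ideal.Quotient.eq] at hab
    rw [Ideal.Quotient.eq]
    refine hkey (f - g) ?_
    rw [show Sf (f - g) = Sf f - Sf g from map_sub Salg f g]
    exact hab
  · -- range
    ext a
    constructor
    · rintro ⟨b, rfl⟩
      obtain ⟨f, rfl⟩ := Ideal.Quotient.mk_surjective b
      show σ _ = _
      rw [hi, hσ (Sf f)]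
      show Ideal.Quotient.mk I (Tf (Sf f)) = _
      rw [Tf_Sf]
    · intro ha
      obtain ⟨g, rfl⟩ := Ideal.Quotient.mk_surjective a
      have hσg : Ideal.Quotient.mk I (Tf g) = Ideal.Quotient.mk I g :=
        (hσ g).symm.trans ha
      have hsub : Tf g - g ∈ I := Ideal.Quotient.eq.mp hσg
      set Eg : MvPowerSeries (Fin 2) k :=
        g + (MvPowerSeries.C (σ := Fin 2) (R := k)) 2⁻¹ * (Tf g - g) with hEg_def
      have hEg_even : ∀ d : Fin 2 →₀ ℕ, d 0 % 2 ≠ 0 → MvPowerSeries.coeff d Eg = 0 := by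
        intro d hd
        rw [hEg_def, map_add, MvPowerSeries.coeff_C_mul, map_sub, coeff_Tf,
          Odd.neg_one_pow (Nat.odd_iff.mpr (by omega)), neg_one_mul]
        have h22 : (2⁻¹ : k) * 2 = 1 := inv_mul_cancel₀ h2
        linear_combination (-(MvPowerSeries.coeff d g)) * h22
      obtain ⟨h', hh'⟩ := exists_Sf hEg_even
      refine ⟨Ideal.Quotient.mk J h', ?_⟩
      rw [hi, hh', Ideal.Quotient.eq]
      have : Eg - g = (MvPowerSeries.C (σ := Fin 2) (R := k)) 2⁻¹ * (Tf g - g) := by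
        rw [hEg_def]; ring
      rw [this]
      exact I.mul_mem_left _ hsub
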